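/- For any two convex bodies K and L in ℝⁿ, there exist translates K̄ = K + x and L̄ = L + y such that K̄ and L̄ are at a dilation position, i.e., the origin lies in K̄ ∩ L̄ and r(K̄,L̄)·L̄ ⊆ K̄ ⊆ R(K̄,L̄)·L̄. -/

import Mathlib

open Pointwise

/-- The translateSet `x + K` of a set. -/
def translateSet {n : ℕ} (x : EuclideanSpace ℝ (Fin n)) (K : Set (EuclideanSpace ℝ (Fin n))) :
    Set (EuclideanSpace ℝ (Fin n)) := (fun y => x + y) '' K

/-- The inradius of `K` relative to `L`: the largest `t > 0` such that some translateSet of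
`tL` is contained in `K`. -/
noncomputable def inradius {n : ℕ} (K L : Set (EuclideanSpace ℝ (Fin n))) : ℝ :=
  sSup {t : ℝ | 0 < t ∧ ∃ x, translateSet x (t • L) ⊆ K}

/-- The outradius of `K` relative to `L`: the smallest `t > 0` such that some translateSet of
`tL` contains `K`. -/
noncomputable def outradius {n : ℕ} (K L : Set (EuclideanSpace ℝ (Fin n))) : ℝ :=
  sInf {t : ℝ | 0 < t ∧ ∃ x, K ⊆ translateSet x (t • L)}

/-- `K` and `L` are at a dilation position: the origin lies in `K ∩ L` and
`r(K,L)·L ⊆ K ⊆ R(K,L)·L`. -/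
def AtDilationPosition {n : ℕ} (K L : Set (EuclideanSpace ℝ (Fin n))) : Prop :=
  (0 ∈ K ∧ 0 ∈ L) ∧ inradius K L • L ⊆ K ∧ K ⊆ outradius K L • L

namespace DilationAux

variable {n : ℕ}

lemma mem_translateSet {x q : EuclideanSpace ℝ (Fin n)}
    {K : Set (EuclideanSpace ℝ (Fin n))} : q ∈ translateSet x K ↔ q - x ∈ K := by
  constructor
  · rintro ⟨k, hk, rfl⟩; simpa using hk
  · intro h; exact ⟨q - x, h, by simp⟩

lemma translateSet_translateSet {a b : EuclideanSpace ℝ (Fin n)}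
    {S : Set (EuclideanSpace ℝ (Fin n))} :
    translateSet a (translateSet b S) = translateSet (a + b) S := by
  ext q
  simp [mem_translateSet, sub_sub]

lemma translateSet_smul_subset_iff {w : EuclideanSpace ℝ (Fin n)} {t : ℝ}
    {L K : Set (EuclideanSpace ℝ (Fin n))} :
    translateSet w (t • L) ⊆ K ↔ ∀ l ∈ L, w + t • l ∈ K := by
  constructor
  · intro h l hl
    exact h ⟨t • l, ⟨l, hl, rfl⟩, rfl⟩
  · rintro h q ⟨p, ⟨l, hl, rfl⟩, rfl⟩
    exact h l hl

lemma subset_translateSet_smul_iff {w : EuclideanSpace ℝ (Fin n)} {t : ℝ}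
    {L K : Set (EuclideanSpace ℝ (Fin n))} :
    K ⊆ translateSet w (t • L) ↔ ∀ k ∈ K, k - w ∈ t • L := by
  constructor
  · intro h k hk; exact mem_translateSet.mp (h hk)
  · intro h k hk; exact mem_translateSet.mpr (h k hk)

lemma inradius_translateSet (x y : EuclideanSpace ℝ (Fin n))
    (K L : Set (EuclideanSpace ℝ (Fin n))) :
    inradius (translateSet x K) (translateSet y L) = inradius K L := by
  unfold inradius
  congr 1
  ext t
  simp only [Set.mem_setOf_eq, and_congr_right_iff]
  intro _
  constructor
  · rintro ⟨z, hz⟩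
    rw [translateSet_smul_subset_iff] at hz
    refine ⟨z + t • y - x, translateSet_smul_subset_iff.mpr fun l hl => ?_⟩
    have h := hz (y + l) ⟨l, hl, rfl⟩
    rw [mem_translateSet] at h
    have e : z + t • y - x + t • l = z + t • (y + l) - x := by rw [smul_add]; abel
    rwa [e]
  · rintro ⟨w, hw⟩
    rw [translateSet_smul_subset_iff] at hw
    refine ⟨w - t • y + x, translateSet_smul_subset_iff.mpr ?_⟩
    rintro p ⟨l, hl, rfl⟩
    rw [mem_translateSet]
    have e : w - t • y + x + t • (y + l) - x = w + t • l := by rw [smul_add]; abel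
    rw [e]; exact hw l hl

lemma outradius_translateSet (x y : EuclideanSpace ℝ (Fin n))
    (K L : Set (EuclideanSpace ℝ (Fin n))) :
    outradius (translateSet x K) (translateSet y L) = outradius K L := by
  unfold outradius
  congr 1
  ext t
  simp only [Set.mem_setOf_eq, and_congr_right_iff]
  intro _
  constructor
  · rintro ⟨z, hz⟩
    rw [subset_translateSet_smul_iff] at hz
    refine ⟨z + t • y - x, subset_translateSet_smul_iff.mpr fun k hk => ?_⟩
    obtain ⟨p, ⟨l, hl, rfl⟩, hp⟩ := hz (x + k) ⟨k, hk, rfl⟩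
    refine ⟨l, hl, ?_⟩
    have hp' : t • (y + l) = x + k - z := hp
    rw [smul_add] at hp'
    show t • l = k - (z + t • y - x)
    have : t • l = x + k - z - t • y := by rw [← hp']; abel
    rw [this]; abel
  · rintro ⟨w, hw⟩
    rw [subset_translateSet_smul_iff] at hw
    refine ⟨w - t • y + x, subset_translateSet_smul_iff.mpr ?_⟩
    rintro p ⟨k, hk, rfl⟩
    obtain ⟨l, hl, hp⟩ := hw k hk
    refine ⟨y + l, ⟨l, hl, rfl⟩, ?_⟩
    have hp' : t • l = k - w := hp
    show t • (y + l) = (x + k) - (w - t • y + x)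
    rw [smul_add, hp']; abel

/-- Separation lemma: if `c + rL ⊆ RL` then `c ∈ (R-r)L`. -/
lemma sep_lemma {L : Set (EuclideanSpace ℝ (Fin n))} (hL : Convex ℝ L) (hLc : IsCompact L)
    (hne : L.Nonempty) {r R : ℝ} (hR : 0 ≤ R) {c : EuclideanSpace ℝ (Fin n)}
    (h : ∀ l ∈ L, c + r • l ∈ R • L) : c ∈ (R - r) • L := by
  by_contra hc
  obtain ⟨f, u, hfu, huc⟩ := geometric_hahn_banach_closed_point
    (hL.smul (R - r)) ((hLc.smul (R - r)).isClosed) hc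
  obtain ⟨l₀, hl₀, hmax⟩ := hLc.exists_isMaxOn hne f.continuous.continuousOn
  obtain ⟨l', hl', hp⟩ := h l₀ hl₀
  have h1 : R * f l' = f c + r * f l₀ := by
    have := congrArg f hp
    simpa [map_add, map_smul] using this
  have h2 : (R - r) * f l₀ < u := by
    simpa [map_smul] using hfu _ ⟨l₀, hl₀, rfl⟩
  have h3 : R * f l' ≤ R * f l₀ := mul_le_mul_of_nonneg_left (hmax hl') hR
  linarith

lemma smul_set_mono_of_le {L : Set (EuclideanSpace ℝ (Fin n))} (hL : Convex ℝ L)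
    (hL0 : (0 : EuclideanSpace ℝ (Fin n)) ∈ L) {s t : ℝ} (hs : 0 ≤ s) (hst : s ≤ t)
    (ht : 0 < t) : s • L ⊆ t • L := by
  rintro p ⟨l, hl, rfl⟩
  refine ⟨(s / t) • l, ?_, ?_⟩
  · have h1 : 0 ≤ s / t := div_nonneg hs ht.le
    have h2 : 0 ≤ 1 - s / t := by
      have : s / t ≤ 1 := (div_le_one ht).mpr hst
      linarith
    have := hL hl hL0 h1 h2 (by ring)
    simpa using this
  · show t • ((s / t) • l) = s • l
    rw [smul_smul, mul_comm, div_mul_cancel₀ _ ht.ne']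

lemma inradius_attained (hn : 0 < n) (K L : Set (EuclideanSpace ℝ (Fin n)))
    (hKcpt : IsCompact K) (hK0 : 0 ∈ interior K)
    (hLconv : Convex ℝ L) (hLcpt : IsCompact L) (hL0 : 0 ∈ interior L) :
    ∃ a : EuclideanSpace ℝ (Fin n), ∀ l ∈ L, a + inradius K L • l ∈ K := by
  have hset : {t : ℝ | 0 < t ∧ ∃ x, translateSet x (t • L) ⊆ K}
      = {t : ℝ | 0 < t ∧ ∃ w, ∀ l ∈ L, w + t • l ∈ K} := by
    ext t
    simp only [Set.mem_setOf_eq, translateSet_smul_subset_iff]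
  have hir : inradius K L = sSup {t : ℝ | 0 < t ∧ ∃ w, ∀ l ∈ L, w + t • l ∈ K} := by
    rw [inradius, hset]
  rw [hir]
  have hL0' : (0 : EuclideanSpace ℝ (Fin n)) ∈ L := interior_subset hL0
  have hK0' : (0 : EuclideanSpace ℝ (Fin n)) ∈ K := interior_subset hK0
  obtain ⟨ε, hε, hball⟩ := Metric.isOpen_iff.mp isOpen_interior 0 hK0
  obtain ⟨δ, hδ, hδball⟩ := Metric.isOpen_iff.mp isOpen_interior 0 hL0
  obtain ⟨M, hM⟩ := hLcpt.isBounded.exists_norm_le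
  obtain ⟨MK, hMK⟩ := hKcpt.isBounded.exists_norm_le
  have hMpos : (0:ℝ) < max M 1 := lt_max_of_lt_right one_pos
  have hMKnn : (0:ℝ) ≤ MK := le_trans (by simp) (hMK 0 hK0')
  set S : Set ℝ := {t : ℝ | 0 < t ∧ ∃ w, ∀ l ∈ L, w + t • l ∈ K} with hSdef
  -- S nonempty
  have ht₀ : ε / (2 * max M 1) ∈ S := by
    refine ⟨by positivity, 0, fun l hl => ?_⟩
    refine interior_subset (hball ?_)
    rw [Metric.mem_ball, dist_zero_right, zero_add, norm_smul, Real.norm_eq_abs]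
    have h1 : ‖l‖ ≤ max M 1 := le_trans (hM l hl) (le_max_left _ _)
    have h2 : |ε / (2 * max M 1)| = ε / (2 * max M 1) := abs_of_pos (by positivity)
    rw [h2]
    calc ε / (2 * max M 1) * ‖l‖ ≤ ε / (2 * max M 1) * max M 1 := by
          exact mul_le_mul_of_nonneg_left h1 (by positivity)
      _ = ε / 2 := by field_simp
      _ < ε := by linarith
  have hSne : S.Nonempty := ⟨_, ht₀⟩
  -- the unit vector
  set e : EuclideanSpace ℝ (Fin n) := EuclideanSpace.single ⟨0, hn⟩ (1:ℝ) with he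
  have hene : ‖e‖ = 1 := by rw [he, EuclideanSpace.norm_single, norm_one]
  have hein : (δ/2) • e ∈ L := by
    refine interior_subset (hδball ?_)
    rw [Metric.mem_ball, dist_zero_right, norm_smul, hene, mul_one, Real.norm_eq_abs,
      abs_of_pos (by positivity)]
    linarith
  -- bddAbove
  have hbdd : BddAbove S := by
    refine ⟨4 * MK / δ, fun t ht => ?_⟩
    obtain ⟨htpos, w, hw⟩ := ht
    have h1 := hw 0 hL0'
    have h2 := hw _ hein
    have h3 : ‖(w + t • (δ/2) • e) - (w + t • (0:EuclideanSpace ℝ (Fin n)))‖ ≤ 2 * MK := by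
      calc ‖(w + t • (δ/2) • e) - (w + t • (0:EuclideanSpace ℝ (Fin n)))‖
          ≤ ‖w + t • (δ/2) • e‖ + ‖w + t • (0:EuclideanSpace ℝ (Fin n))‖ := norm_sub_le _ _
        _ ≤ MK + MK := add_le_add (hMK _ h2) (hMK _ h1)
        _ = 2 * MK := by ring
    have h4 : ‖(w + t • (δ/2) • e) - (w + t • (0:EuclideanSpace ℝ (Fin n)))‖ = t * (δ/2) := by
      have : (w + t • (δ/2) • e) - (w + t • (0:EuclideanSpace ℝ (Fin n))) = t • (δ/2) • e := by
        rw [smul_zero]; abel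
      rw [this, norm_smul, norm_smul, hene, mul_one, Real.norm_eq_abs, Real.norm_eq_abs,
        abs_of_pos htpos, abs_of_pos (by positivity)]
    rw [h4] at h3
    rw [le_div_iff₀ hδ]
    nlinarith
  have hrpos : 0 < sSup S := lt_of_lt_of_le (by positivity) (le_csSup hbdd ht₀)
  set r := sSup S with hr
  -- downward closedness / Ioo ⊆ S
  have hIoo : ∀ t ∈ Set.Ioo (0:ℝ) r, t ∈ S := by
    rintro t ⟨ht0, htr⟩
    obtain ⟨t', ht'S, htt'⟩ := exists_lt_of_lt_csSup hSne htr
    obtain ⟨ht'pos, w, hw⟩ := ht'S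
    refine ⟨ht0, w, fun l hl => ?_⟩
    have : t • l ∈ t' • L := by
      refine smul_set_mono_of_le hLconv hL0' ht0.le htt'.le ht'pos ⟨l, hl, rfl⟩
    obtain ⟨l', hl', hl'e⟩ := this
    have : w + t • l = w + t' • l' := by rw [← hl'e]
    rw [this]
    exact hw l' hl'
  -- the family
  set A : ℝ → Set (EuclideanSpace ℝ (Fin n)) := fun t => {w | ∀ l ∈ L, w + t • l ∈ K} with hA
  have hAclosed : ∀ t, IsClosed (A t) := by
    intro t
    have : A t = ⋂ l ∈ L, (fun w => w + t • l) ⁻¹' K := by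
      ext w; simp [hA]
    rw [this]
    exact isClosed_biInter fun l _ => hKcpt.isClosed.preimage (by fun_prop)
  have hAsub : ∀ t, A t ⊆ K := fun t w hw => by simpa using hw 0 hL0'
  have hAcpt : ∀ t, IsCompact (A t) := fun t =>
    hKcpt.of_isClosed_subset (hAclosed t) (hAsub t)
  have hAmono : ∀ s t : ℝ, 0 ≤ s → s ≤ t → 0 < t → A t ⊆ A s := by
    intro s t hs hst ht w hw l hl
    obtain ⟨l', hl', hl'e⟩ := smul_set_mono_of_le hLconv hL0' hs hst ht
      (⟨l, hl, rfl⟩ : s • l ∈ s • L)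
    have : w + s • l = w + t • l' := by rw [← hl'e]
    rw [this]
    exact hw l' hl'
  haveI : Nonempty (Set.Ioo (0:ℝ) r) := (Set.nonempty_Ioo.mpr hrpos).to_subtype
  have hinter : (⋂ i : Set.Ioo (0:ℝ) r, A i).Nonempty := by
    refine IsCompact.nonempty_iInter_of_directed_nonempty_isCompact_isClosed
      (fun i : Set.Ioo (0:ℝ) r => A i) ?_ ?_ (fun i => hAcpt _) (fun i => hAclosed _)
    · rintro ⟨i, hi⟩ ⟨j, hj⟩
      refine ⟨⟨max i j, lt_max_of_lt_left hi.1, max_lt hi.2 hj.2⟩, ?_, ?_⟩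
      · exact hAmono i (max i j) hi.1.le (le_max_left _ _) (lt_max_of_lt_left hi.1)
      · exact hAmono j (max i j) hj.1.le (le_max_right _ _) (lt_max_of_lt_left hi.1)
    · rintro ⟨i, hi⟩
      obtain ⟨-, w, hw⟩ := hIoo i hi
      exact ⟨w, hw⟩
  obtain ⟨a, ha⟩ := hinter
  refine ⟨a, fun l hl => ?_⟩
  have key : ∀ t ∈ Set.Ioo (0:ℝ) r, a + t • l ∈ K := fun t ht =>
    (Set.mem_iInter.mp ha ⟨t, ht⟩) l hl
  have hcont : Continuous (fun t : ℝ => a + t • l) := by fun_prop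
  have hrcl : r ∈ closure (Set.Ioo (0:ℝ) r) := by
    rw [closure_Ioo hrpos.ne]
    exact Set.right_mem_Icc.mpr hrpos.le
  have hmem : a + r • l ∈ closure K := by
    refine closure_mono (Set.image_subset_iff.mpr fun t ht => key t ht)
      (hcont.continuousWithinAt.mem_closure_image hrcl)
  rwa [hKcpt.isClosed.closure_eq] at hmem

lemma outradius_attained (hn : 0 < n) (K L : Set (EuclideanSpace ℝ (Fin n)))
    (hKcpt : IsCompact K) (hK0 : 0 ∈ interior K)
    (hLconv : Convex ℝ L) (hLcpt : IsCompact L) (hL0 : 0 ∈ interior L) :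
    0 < outradius K L ∧
      ∃ b : EuclideanSpace ℝ (Fin n), ∀ k ∈ K, k - b ∈ outradius K L • L := by
  have hset : {t : ℝ | 0 < t ∧ ∃ x, K ⊆ translateSet x (t • L)}
      = {t : ℝ | 0 < t ∧ ∃ w, ∀ k ∈ K, k - w ∈ t • L} := by
    ext t
    simp only [Set.mem_setOf_eq, subset_translateSet_smul_iff]
  have hor : outradius K L = sInf {t : ℝ | 0 < t ∧ ∃ w, ∀ k ∈ K, k - w ∈ t • L} := by
    rw [outradius, hset]
  rw [hor]
  have hL0' : (0 : EuclideanSpace ℝ (Fin n)) ∈ L := interior_subset hL0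
  have hK0' : (0 : EuclideanSpace ℝ (Fin n)) ∈ K := interior_subset hK0
  obtain ⟨ε, hε, hball⟩ := Metric.isOpen_iff.mp isOpen_interior 0 hK0
  obtain ⟨δ, hδ, hδball⟩ := Metric.isOpen_iff.mp isOpen_interior 0 hL0
  obtain ⟨M, hM⟩ := hLcpt.isBounded.exists_norm_le
  obtain ⟨MK, hMK⟩ := hKcpt.isBounded.exists_norm_le
  have hMpos : (0:ℝ) < max M 1 := lt_max_of_lt_right one_pos
  have hMKnn : (0:ℝ) ≤ MK := le_trans (by simp) (hMK 0 hK0')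
  set S : Set ℝ := {t : ℝ | 0 < t ∧ ∃ w, ∀ k ∈ K, k - w ∈ t • L} with hSdef
  -- S nonempty
  have hSne : S.Nonempty := by
    refine ⟨2 * (MK + 1) / δ, by positivity, 0, fun k hk => ?_⟩
    have htpos : (0:ℝ) < 2 * (MK + 1) / δ := by positivity
    refine ⟨(2 * (MK + 1) / δ)⁻¹ • (k - 0), ?_, smul_inv_smul₀ htpos.ne' _⟩
    refine interior_subset (hδball ?_)
    rw [Metric.mem_ball, dist_zero_right, norm_smul, Real.norm_eq_abs,
      abs_of_pos (by positivity), sub_zero]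
    have h1 : ‖k‖ ≤ MK := hMK k hk
    have h2 : (2 * (MK + 1) / δ)⁻¹ = δ / (2 * (MK + 1)) := by
      rw [inv_div]
    rw [h2]
    calc δ / (2 * (MK + 1)) * ‖k‖ ≤ δ / (2 * (MK + 1)) * MK := by
          exact mul_le_mul_of_nonneg_left h1 (by positivity)
      _ < δ := by
          rw [div_mul_eq_mul_div, div_lt_iff₀ (by positivity)]
          nlinarith
  -- unit vector
  set e : EuclideanSpace ℝ (Fin n) := EuclideanSpace.single ⟨0, hn⟩ (1:ℝ) with he
  have hene : ‖e‖ = 1 := by rw [he, EuclideanSpace.norm_single, norm_one]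
  have hein : (ε/2) • e ∈ K := by
    refine interior_subset (hball ?_)
    rw [Metric.mem_ball, dist_zero_right, norm_smul, hene, mul_one, Real.norm_eq_abs,
      abs_of_pos (by positivity)]
    linarith
  -- lower bound
  have hlow : ∀ t ∈ S, (ε/2) / (2 * max M 1) ≤ t := by
    rintro t ⟨htpos, w, hw⟩
    obtain ⟨l₁, hl₁, h1⟩ := hw 0 hK0'
    obtain ⟨l₂, hl₂, h2⟩ := hw _ hein
    have h1' : t • l₁ = 0 - w := h1
    have h2' : t • l₂ = (ε/2) • e - w := h2
    have h3 : t • (l₂ - l₁) = (ε/2) • e := by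
      rw [smul_sub, h1', h2']; abel
    have h4 : t * ‖l₂ - l₁‖ = ε/2 := by
      have := congrArg norm h3
      rwa [norm_smul, norm_smul, hene, mul_one, Real.norm_eq_abs, Real.norm_eq_abs,
        abs_of_pos htpos, abs_of_pos (by positivity)] at this
    have h5 : ‖l₂ - l₁‖ ≤ 2 * max M 1 := by
      calc ‖l₂ - l₁‖ ≤ ‖l₂‖ + ‖l₁‖ := norm_sub_le _ _
        _ ≤ max M 1 + max M 1 :=
            add_le_add (le_trans (hM _ hl₂) (le_max_left _ _))
              (le_trans (hM _ hl₁) (le_max_left _ _))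
        _ = 2 * max M 1 := by ring
    rw [div_le_iff₀ (by positivity)]
    nlinarith
  have hRpos : 0 < sInf S := lt_of_lt_of_le (by positivity) (le_csInf hSne hlow)
  set R := sInf S with hR
  refine ⟨hRpos, ?_⟩
  -- upward closedness
  have hIoc : ∀ t, R < t → t ∈ S := by
    intro t ht
    obtain ⟨t', ht'S, htt'⟩ := exists_lt_of_csInf_lt hSne ht
    obtain ⟨ht'pos, w, hw⟩ := ht'S
    exact ⟨lt_trans ht'pos htt', w, fun k hk =>
      smul_set_mono_of_le hLconv hL0' ht'pos.le htt'.le (lt_trans ht'pos htt') (hw k hk)⟩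
  -- family
  set B : ℝ → Set (EuclideanSpace ℝ (Fin n)) := fun t => {w | ∀ k ∈ K, k - w ∈ t • L} with hB
  have hBclosed : ∀ t, IsClosed (B t) := by
    intro t
    have : B t = ⋂ k ∈ K, (fun w => k - w) ⁻¹' (t • L) := by
      ext w; simp [hB]
    rw [this]
    exact isClosed_biInter fun k _ => ((hLcpt.smul t).isClosed).preimage (by fun_prop)
  have hBcpt : ∀ t, IsCompact (B t) := by
    intro t
    refine (isCompact_closedBall (0:EuclideanSpace ℝ (Fin n))
      (|t| * max M 1)).of_isClosed_subset (hBclosed t) ?_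
    intro w hw
    obtain ⟨l, hl, hle⟩ := hw 0 hK0'
    have hle' : t • l = 0 - w := hle
    rw [Metric.mem_closedBall, dist_zero_right]
    have : ‖w‖ = |t| * ‖l‖ := by
      have : w = -(t • l) := by rw [hle']; abel
      rw [this, norm_neg, norm_smul, Real.norm_eq_abs]
    rw [this]
    exact mul_le_mul_of_nonneg_left (le_trans (hM _ hl) (le_max_left _ _)) (abs_nonneg t)
  have hBmono : ∀ s t : ℝ, 0 < s → s ≤ t → B s ⊆ B t := by
    intro s t hs hst w hw k hk
    exact smul_set_mono_of_le hLconv hL0' hs.le hst (lt_of_lt_of_le hs hst) (hw k hk)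
  haveI : Nonempty (Set.Ioc R (R+1)) := (Set.nonempty_Ioc.mpr (by linarith)).to_subtype
  have hinter : (⋂ i : Set.Ioc R (R+1), B i).Nonempty := by
    refine IsCompact.nonempty_iInter_of_directed_nonempty_isCompact_isClosed
      (fun i : Set.Ioc R (R+1) => B i) ?_ ?_ (fun i => hBcpt _) (fun i => hBclosed _)
    · rintro ⟨i, hi⟩ ⟨j, hj⟩
      refine ⟨⟨min i j, lt_min hi.1 hj.1, le_trans (min_le_left _ _) hi.2⟩, ?_, ?_⟩
      · exact hBmono _ _ (lt_trans hRpos (lt_min hi.1 hj.1)) (min_le_left _ _)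
      · exact hBmono _ _ (lt_trans hRpos (lt_min hi.1 hj.1)) (min_le_right _ _)
    · rintro ⟨i, hi⟩
      obtain ⟨-, w, hw⟩ := hIoc i hi.1
      exact ⟨w, hw⟩
  obtain ⟨b, hb⟩ := hinter
  refine ⟨b, fun k hk => ?_⟩
  have key : ∀ t ∈ Set.Ioc R (R+1), t⁻¹ • (k - b) ∈ L := by
    intro t ht
    have h1 : k - b ∈ t • L := (Set.mem_iInter.mp hb ⟨t, ht⟩) k hk
    exact (Set.mem_smul_set_iff_inv_smul_mem₀ (lt_trans hRpos ht.1).ne' _ _).mp h1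
  have hcont : ContinuousAt (fun t : ℝ => t⁻¹ • (k - b)) R :=
    (continuousAt_inv₀ hRpos.ne').smul continuousAt_const
  have hRcl : R ∈ closure (Set.Ioc R (R+1)) := by
    rw [closure_Ioc (by linarith : R ≠ R + 1)]
    exact ⟨le_refl _, by linarith⟩
  have hmem : R⁻¹ • (k - b) ∈ closure L :=
    closure_mono (Set.image_subset_iff.mpr fun t ht => key t ht)
      (hcont.continuousWithinAt.mem_closure_image hRcl)
  rw [hLcpt.isClosed.closure_eq] at hmem
  exact ⟨R⁻¹ • (k - b), hmem, smul_inv_smul₀ hRpos.ne' _⟩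

lemma main_pos (hn : 0 < n) (K L : Set (EuclideanSpace ℝ (Fin n)))
    (hKconv : Convex ℝ K) (hKcpt : IsCompact K) (hK0 : 0 ∈ interior K)
    (hLconv : Convex ℝ L) (hLcpt : IsCompact L) (hL0 : 0 ∈ interior L) :
    ∃ x y : EuclideanSpace ℝ (Fin n),
      AtDilationPosition (translateSet x K) (translateSet y L) := by
  obtain ⟨a, ha⟩ := inradius_attained hn K L hKcpt hK0 hLconv hLcpt hL0
  obtain ⟨hRpos, b, hb⟩ := outradius_attained hn K L hKcpt hK0 hLconv hLcpt hL0
  have hL0' : (0 : EuclideanSpace ℝ (Fin n)) ∈ L := interior_subset hL0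
  have hLne : L.Nonempty := ⟨0, hL0'⟩
  have key : a - b ∈ (outradius K L - inradius K L) • L := by
    refine sep_lemma hLconv hLcpt hLne hRpos.le fun l hl => ?_
    have h1 := ha l hl
    have h2 := hb _ h1
    have e : a - b + inradius K L • l = a + inradius K L • l - b := by abel
    rwa [e]
  suffices hsuff : ∀ y : EuclideanSpace ℝ (Fin n), -y ∈ L →
      outradius K L • y - (inradius K L • y - a) = b →
      AtDilationPosition (translateSet (inradius K L • y - a) K) (translateSet y L) by
    by_cases hrR : outradius K L = inradius K L
    · have h0 : a - b ∈ (0:ℝ) • L := by rwa [hrR, sub_self] at key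
      rw [Set.zero_smul_set hLne] at h0
      have hab : a = b := by
        have : a - b = 0 := by simpa using h0
        exact sub_eq_zero.mp this
      refine ⟨_, 0, hsuff 0 (by simpa using hL0') ?_⟩
      have e : outradius K L • (0:EuclideanSpace ℝ (Fin n))
          - (inradius K L • (0:EuclideanSpace ℝ (Fin n)) - a) = a := by simp
      rw [e]; exact hab
    · obtain ⟨l, hl, hle⟩ := key
      have hle' : (outradius K L - inradius K L) • l = a - b := hle
      refine ⟨_, -l, hsuff (-l) (by simpa using hl) ?_⟩
      have e : outradius K L • (-l) - (inradius K L • (-l) - a)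
          = a - (outradius K L - inradius K L) • l := by
        rw [smul_neg, smul_neg, sub_smul]; abel
      rw [e, hle']
      abel
  intro y hy heq
  refine ⟨⟨?_, ?_⟩, ?_, ?_⟩
  · rw [mem_translateSet]
    have h := ha (-y) hy
    have e : (0:EuclideanSpace ℝ (Fin n)) - (inradius K L • y - a)
        = a + inradius K L • (-y) := by rw [smul_neg]; abel
    rwa [e]
  · rw [mem_translateSet]
    simpa using hy
  · rw [inradius_translateSet]
    rintro p ⟨q, ⟨l, hl, rfl⟩, rfl⟩
    rw [mem_translateSet]
    show inradius K L • (y + l) - (inradius K L • y - a) ∈ K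
    have e : inradius K L • (y + l) - (inradius K L • y - a) = a + inradius K L • l := by
      rw [smul_add]; abel
    rw [e]; exact ha l hl
  · rw [outradius_translateSet]
    rintro p ⟨k, hk, rfl⟩
    obtain ⟨l, hl, hlk⟩ := hb k hk
    have hlk' : outradius K L • l = k - b := hlk
    refine ⟨y + l, ⟨l, hl, rfl⟩, ?_⟩
    show outradius K L • (y + l) = (inradius K L • y - a) + k
    rw [smul_add, hlk', ← heq]; abel

end DilationAux

/-- any two convex bodies in `ℝⁿ` admit translateSets that are at a
dilation position. -/
theorem stmt_2 (n : ℕ) (K L : Set (EuclideanSpace ℝ (Fin n)))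
    (hKconv : Convex ℝ K) (hKcpt : IsCompact K) (hKint : (interior K).Nonempty)
    (hLconv : Convex ℝ L) (hLcpt : IsCompact L) (hLint : (interior L).Nonempty) :
    ∃ x y : EuclideanSpace ℝ (Fin n),
      AtDilationPosition (translateSet x K) (translateSet y L) := by
  rcases Nat.eq_zero_or_pos n with hn | hn
  · subst hn
    haveI : Subsingleton (EuclideanSpace ℝ (Fin 0)) := ⟨fun a b => PiLp.ext fun i => i.elim0⟩
    obtain ⟨k0, hk0⟩ := hKint
    obtain ⟨l0, hl0⟩ := hLint
    have hK0 : (0 : EuclideanSpace ℝ (Fin 0)) ∈ K := by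
      rw [Subsingleton.elim (0 : EuclideanSpace ℝ (Fin 0)) k0]; exact interior_subset hk0
    have hL0 : (0 : EuclideanSpace ℝ (Fin 0)) ∈ L := by
      rw [Subsingleton.elim (0 : EuclideanSpace ℝ (Fin 0)) l0]; exact interior_subset hl0
    refine ⟨0, 0, ⟨⟨?_, ?_⟩, ?_, ?_⟩⟩
    · exact DilationAux.mem_translateSet.mpr (by simpa using hK0)
    · exact DilationAux.mem_translateSet.mpr (by simpa using hL0)
    · intro z hz
      rw [Subsingleton.elim z (0 : EuclideanSpace ℝ (Fin 0))]
      exact DilationAux.mem_translateSet.mpr (by simpa using hK0)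
    · intro z hz
      refine ⟨0, DilationAux.mem_translateSet.mpr (by simpa using hL0), Subsingleton.elim _ _⟩
  · obtain ⟨p, hp⟩ := hKint
    obtain ⟨q, hq⟩ := hLint
    have hKc' : Convex ℝ (translateSet (-p) K) := hKconv.translate (-p)
    have hLc' : Convex ℝ (translateSet (-q) L) := hLconv.translate (-q)
    have hKcpt' : IsCompact (translateSet (-p) K) := hKcpt.image (by fun_prop)
    have hLcpt' : IsCompact (translateSet (-q) L) := hLcpt.image (by fun_prop)
    have hK0' : (0 : EuclideanSpace ℝ (Fin n)) ∈ interior (translateSet (-p) K) :=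
      (isOpenMap_add_left (-p)).image_interior_subset K ⟨p, hp, by simp⟩
    have hL0' : (0 : EuclideanSpace ℝ (Fin n)) ∈ interior (translateSet (-q) L) :=
      (isOpenMap_add_left (-q)).image_interior_subset L ⟨q, hq, by simp⟩
    obtain ⟨x, y, hxy⟩ := DilationAux.main_pos hn _ _ hKc' hKcpt' hK0' hLc' hLcpt' hL0'
    rw [DilationAux.translateSet_translateSet, DilationAux.translateSet_translateSet] at hxy
    exact ⟨x + -p, y + -q, hxy⟩
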